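/- Let 𝒜 be a finite list in a finitely generated abelian group Γ, G a torsion-wise finite abelian group, and α ∈ 𝒜. Let 𝒜' = 𝒜\{α} and 𝒜'' the contraction in Γ'' = Γ/⟨α⟩. Then the G-Tutte polynomial satisfies the deletion–contraction formula: T_𝒜^G(x,y) = T_{𝒜'}^G(x,y) + (y−1)T_{𝒜''}^G(x,y) if α is a loop (α ∈ Γ_tor); T_𝒜^G(x,y) = (x−1)T_{𝒜'}^G(x,y) + T_{𝒜''}^G(x,y) if α is a coloop (r_𝒜 = r_{𝒜'} + 1); and T_𝒜^G(x,y) = T_{𝒜'}^G(x,y) + T_{𝒜''}^G(x,y) if α is proper (neither loop nor coloop). -/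

import Mathlib

def TorsionwiseFinite (G : Type*) [AddCommGroup G] : Prop :=
  ∀ d : ℕ, 0 < d → Finite {x : G // d • x = 0}

noncomputable def rk (Γ : Type*) [AddCommGroup Γ] (X : Set Γ) : ℕ :=
  Module.finrank ℤ (AddSubgroup.closure X)

noncomputable def mult (Γ : Type*) [AddCommGroup Γ] (G : Type*) [AddCommGroup G]
    (X : Set Γ) : ℕ :=
  Nat.card ((AddCommGroup.torsion (Γ ⧸ AddSubgroup.closure X)) →+ G)

noncomputable def Tpoly {ι Γ : Type*} [AddCommGroup Γ] (G : Type*) [AddCommGroup G]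
    (A : Finset ι) (a : ι → Γ) (x y : ℤ) : ℤ :=
  ∑ S ∈ A.powerset, (mult Γ G (a '' (S : Set ι)) : ℤ) *
    (x - 1) ^ (rk Γ (a '' (A : Set ι)) - rk Γ (a '' (S : Set ι))) *
    (y - 1) ^ (S.card - rk Γ (a '' (S : Set ι)))

open AddSubgroup

universe u v


section Helpers

variable {M P : Type u} [AddCommGroup M] [AddCommGroup P]

private lemma rank_int_congr {iM : Module ℤ M} {iP : Module ℤ P} (e : M ≃+ P) :
    @Module.rank ℤ M _ _ iM = @Module.rank ℤ P _ _ iP := by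
  letI : Unique (Module ℤ M) := AddCommGroup.uniqueIntModule
  letI : Unique (Module ℤ P) := AddCommGroup.uniqueIntModule
  obtain rfl : iM = AddCommGroup.toIntModule M := Subsingleton.elim _ _
  obtain rfl : iP = AddCommGroup.toIntModule P := Subsingleton.elim _ _
  exact e.toIntLinearEquiv.rank_eq

private lemma rank_nullity_int (f : M →+ P) (hf : Function.Surjective f) :
    Module.rank ℤ P + Module.rank ℤ f.ker = Module.rank ℤ M := by
  have h1 := Submodule.rank_quotient_add_rank (LinearMap.ker f.toIntLinearMap)
  have h2 : Module.rank ℤ (M ⧸ LinearMap.ker f.toIntLinearMap) = Module.rank ℤ P :=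
    (f.toIntLinearMap.quotKerEquivOfSurjective hf).rank_eq
  have h3 : Module.rank ℤ (LinearMap.ker f.toIntLinearMap) = Module.rank ℤ f.ker := by
    refine rank_int_congr ?_
    exact
      { toFun := fun z => ⟨z.1, z.2⟩
        invFun := fun z => ⟨z.1, z.2⟩
        left_inv := fun z => rfl
        right_inv := fun z => rfl
        map_add' := fun z w => rfl }
  rw [h2, h3] at h1
  exact h1

private lemma rank_int_le_of_surjective (f : M →+ P) (hf : Function.Surjective f) :
    Module.rank ℤ P ≤ Module.rank ℤ M := by
  rw [← rank_nullity_int f hf]; exact self_le_add_right _ _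

private lemma rank_int_le_of_injective (f : M →+ P) (hf : Function.Injective f) :
    Module.rank ℤ M ≤ Module.rank ℤ P :=
  f.toIntLinearMap.rank_le_of_injective hf

private lemma rank_closure_eq_rank_span (s : Set M) :
    Module.rank ℤ (closure s) = Module.rank ℤ (Submodule.span ℤ s) := by
  refine rank_int_congr (AddEquiv.trans
    (AddEquiv.addSubgroupCongr (Submodule.span_int_eq_addSubgroupClosure s).symm) ?_)
  exact
    { toFun := fun z => ⟨z.1, z.2⟩
      invFun := fun z => ⟨z.1, z.2⟩
      left_inv := fun z => rfl
      right_inv := fun z => rfl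
      map_add' := fun z w => rfl }

end Helpers


section Helpers

variable {M P : Type u} [AddCommGroup M] [AddCommGroup P]


private lemma rk_def {Γ : Type u} [AddCommGroup Γ] (X : Set Γ) :
    rk Γ X = (Module.rank ℤ (closure X)).toNat := rfl

private lemma rank_span_singleton_zero_iff (α : M) :
    Module.rank ℤ (Submodule.span ℤ ({α} : Set M)) = 0 ↔ IsOfFinAddOrder α := by
  rw [rank_eq_zero_iff]
  constructor
  · intro h
    obtain ⟨n, hn, hx⟩ := h ⟨α, Submodule.mem_span_singleton_self α⟩
    rw [isOfFinAddOrder_iff_nsmul_eq_zero]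
    have hx' : n • α = 0 := by
      have := congrArg Subtype.val hx
      simpa using this
    refine ⟨n.natAbs, Int.natAbs_pos.mpr hn, ?_⟩
    have h2 : ((n.natAbs : ℤ)) • α = 0 := by
      rcases Int.natAbs_eq n with he | he
      · rw [← he]; exact hx'
      · have hne : ((n.natAbs : ℤ)) = -n := by omega
        rw [hne, neg_zsmul, hx', neg_zero]
    rw [← natCast_zsmul]; exact h2
  · intro h x
    obtain ⟨n, hn, hα⟩ := isOfFinAddOrder_iff_nsmul_eq_zero.mp h
    refine ⟨(n : ℤ), by exact_mod_cast hn.ne', ?_⟩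
    obtain ⟨c, hc⟩ := Submodule.mem_span_singleton.mp x.2
    have hv : (n : ℤ) • (x : M) = 0 := by
      rw [← hc, smul_comm, natCast_zsmul, hα, smul_zero]
    exact Subtype.ext (by rw [SetLike.val_smul]; exact hv)

private lemma rank_span_singleton_le_one (α : M) :
    Module.rank ℤ (Submodule.span ℤ ({α} : Set M)) ≤ 1 := by
  simpa using rank_span_le (R := ℤ) ({α} : Set M)

private lemma rk_singleton_le_one {Γ : Type u} [AddCommGroup Γ] (α : Γ) : rk Γ {α} ≤ 1 := by
  rw [rk_def, rank_closure_eq_rank_span]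
  have := Cardinal.toNat_le_toNat (rank_span_singleton_le_one α) Cardinal.one_lt_aleph0
  simpa using this

private lemma rk_singleton_zero_iff {Γ : Type u} [AddCommGroup Γ] (α : Γ) :
    rk Γ {α} = 0 ↔ IsOfFinAddOrder α := by
  rw [rk_def, rank_closure_eq_rank_span, Cardinal.toNat_eq_zero]
  constructor
  · rintro (h | h)
    · exact (rank_span_singleton_zero_iff α).mp h
    · exact absurd ((rank_span_singleton_le_one α).trans_lt Cardinal.one_lt_aleph0)
        (not_lt.mpr h)
  · intro h; exact Or.inl ((rank_span_singleton_zero_iff α).mpr h)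

private lemma rk_image_le_card {ι : Type*} {Γ : Type u} [AddCommGroup Γ]
    (a : ι → Γ) (S : Finset ι) : rk Γ (a '' ↑S) ≤ S.card := by
  classical
  rw [rk_def, rank_closure_eq_rank_span]
  have h1 : Module.rank ℤ (Submodule.span ℤ (a '' ↑S)) ≤ ((S.image a).card : Cardinal) := by
    rw [← Finset.coe_image]
    simpa [Cardinal.mk_coe_finset] using rank_span_le (R := ℤ) (↑(S.image a) : Set Γ)
  have h2 := Cardinal.toNat_le_toNat h1 (Cardinal.nat_lt_aleph0 _)
  simp only [Cardinal.toNat_natCast] at h2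
  exact h2.trans Finset.card_image_le

private lemma rank_closure_lt_aleph0 {Γ : Type u} [AddCommGroup Γ] [AddGroup.FG Γ] (X : Set Γ) :
    Module.rank ℤ (closure X) < Cardinal.aleph0 := by
  haveI : Module.Finite ℤ Γ := Module.Finite.iff_addGroup_fg.mpr ‹_›
  exact lt_of_le_of_lt
    (rank_int_le_of_injective (closure X).subtype (AddSubgroup.subtype_injective _))
    (Module.rank_lt_aleph0 ℤ Γ)

private lemma rk_mono {Γ : Type u} [AddCommGroup Γ] [AddGroup.FG Γ] {s t : Set Γ} (h : s ⊆ t) :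
    rk Γ s ≤ rk Γ t := by
  rw [rk_def, rk_def]
  exact Cardinal.toNat_le_toNat
    (rank_int_le_of_injective (AddSubgroup.inclusion (closure_mono h))
      (AddSubgroup.inclusion_injective _))
    (rank_closure_lt_aleph0 t)

end Helpers


section H3

variable {Γ : Type u} [AddCommGroup Γ]



private lemma map_closure_insert (α : Γ) (s : Set Γ) :
    map (QuotientAddGroup.mk' (closure {α})) (closure (insert α s)) =
      closure (⇑(QuotientAddGroup.mk' (closure {α})) '' s) := by
  rw [AddMonoidHom.map_closure, Set.image_insert_eq,
    show (QuotientAddGroup.mk' (closure {α})) α = 0 from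
      (QuotientAddGroup.eq_zero_iff α).mpr (subset_closure (Set.mem_singleton α)),
    Set.insert_eq, AddSubgroup.closure_union, closure_singleton_zero, bot_sup_eq]

private lemma rk_insert [AddGroup.FG Γ] (α : Γ) (s : Set Γ) :
    rk Γ (insert α s) =
      rk (Γ ⧸ closure ({α} : Set Γ)) (⇑(QuotientAddGroup.mk' (closure {α})) '' s) + rk Γ {α} := by
  set N := closure ({α} : Set Γ) with hN
  set π := QuotientAddGroup.mk' N with hπ
  set H := closure (insert α s) with hH
  have hNH : N ≤ H := closure_mono (Set.singleton_subset_iff.mpr (Set.mem_insert α s))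
  have hker : ∀ z : H, (π.addSubgroupMap H) z = 0 ↔ (z : Γ) ∈ N := by
    intro z
    rw [Subtype.ext_iff]
    have hz : ((π.addSubgroupMap H) z : Γ ⧸ N) = π (z : Γ) := rfl
    rw [hz]
    exact QuotientAddGroup.eq_zero_iff (z : Γ)
  let e : (π.addSubgroupMap H).ker ≃+ N :=
    { toFun := fun z => ⟨z.1.1, (hker z.1).mp z.2⟩
      invFun := fun w => ⟨⟨w.1, hNH w.2⟩, (hker _).mpr w.2⟩
      left_inv := fun z => Subtype.ext (Subtype.ext rfl)
      right_inv := fun w => rfl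
      map_add' := fun z w => rfl }
  have h := rank_nullity_int (π.addSubgroupMap H) (π.addSubgroupMap_surjective H)
  have hfin1 : Module.rank ℤ H < Cardinal.aleph0 := rank_closure_lt_aleph0 _
  have hfin2 : Module.rank ℤ (map π H) < Cardinal.aleph0 :=
    lt_of_le_of_lt (by rw [← h]; exact self_le_add_right _ _) hfin1
  have hfin3 : Module.rank ℤ (π.addSubgroupMap H).ker < Cardinal.aleph0 :=
    lt_of_le_of_lt (by rw [← h]; exact self_le_add_left _ _) hfin1
  have key : Cardinal.toNat (Module.rank ℤ H) =
      Cardinal.toNat (Module.rank ℤ (map π H)) + Cardinal.toNat (Module.rank ℤ N) := by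
    rw [← h, Cardinal.toNat_add hfin2 hfin3]
    congr 1
    exact congrArg Cardinal.toNat (rank_int_congr e)
  rw [rk_def, rk_def, rk_def, ← map_closure_insert α s]
  exact key

private lemma rk_insert_le [AddGroup.FG Γ] (α : Γ) (s : Set Γ) :
    rk Γ (insert α s) ≤ rk Γ s + rk Γ {α} := by
  rw [rk_insert]
  have h1 : rk (Γ ⧸ closure ({α} : Set Γ)) (⇑(QuotientAddGroup.mk' (closure {α})) '' s)
      ≤ rk Γ s := by
    rw [rk_def, rk_def, ← AddMonoidHom.map_closure]
    exact Cardinal.toNat_le_toNat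
      (rank_int_le_of_surjective _
        ((QuotientAddGroup.mk' (closure {α})).addSubgroupMap_surjective (closure s)))
      (rank_closure_lt_aleph0 s)
  omega

end H3



private lemma card_torsion_hom_congr {M P G : Type*} [AddCommGroup M] [AddCommGroup P]
    [AddCommGroup G] (e : M ≃+ P) :
    Nat.card ((AddCommGroup.torsion M) →+ G) = Nat.card ((AddCommGroup.torsion P) →+ G) := by
  have hmem1 : ∀ z : M, z ∈ AddCommGroup.torsion M → e z ∈ AddCommGroup.torsion P := by
    intro z hz
    rw [AddCommGroup.mem_torsion, isOfFinAddOrder_iff_nsmul_eq_zero] at *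
    obtain ⟨n, hn, h⟩ := hz
    exact ⟨n, hn, by rw [← map_nsmul, h, map_zero]⟩
  have hmem2 : ∀ z : P, z ∈ AddCommGroup.torsion P → e.symm z ∈ AddCommGroup.torsion M := by
    intro z hz
    rw [AddCommGroup.mem_torsion, isOfFinAddOrder_iff_nsmul_eq_zero] at *
    obtain ⟨n, hn, h⟩ := hz
    exact ⟨n, hn, by rw [← map_nsmul, h, map_zero]⟩
  let e' : (AddCommGroup.torsion M) ≃+ (AddCommGroup.torsion P) :=
    { toFun := fun z => ⟨e z.1, hmem1 z.1 z.2⟩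
      invFun := fun w => ⟨e.symm w.1, hmem2 w.1 w.2⟩
      left_inv := fun z => Subtype.ext (e.symm_apply_apply z.1)
      right_inv := fun w => Subtype.ext (e.apply_symm_apply w.1)
      map_add' := fun z w => Subtype.ext (map_add e z.1 w.1) }
  refine Nat.card_congr
    { toFun := fun f => f.comp e'.symm.toAddMonoidHom
      invFun := fun f => f.comp e'.toAddMonoidHom
      left_inv := fun f => by ext z; simp
      right_inv := fun f => by ext z; simp }

private lemma mult_insert {Γ : Type u} [AddCommGroup Γ] {G : Type*} [AddCommGroup G]
    (α : Γ) (s : Set Γ) :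
    mult Γ G (insert α s) =
      mult (Γ ⧸ closure ({α} : Set Γ)) G (⇑(QuotientAddGroup.mk' (closure {α})) '' s) := by
  have hNH : closure ({α} : Set Γ) ≤ closure (insert α s) :=
    closure_mono (Set.singleton_subset_iff.mpr (Set.mem_insert α s))
  exact card_torsion_hom_congr
    (((QuotientAddGroup.quotientQuotientEquivQuotient (closure {α}) (closure (insert α s))
        hNH).symm).trans
      (QuotientAddGroup.quotientAddEquivOfEq (map_closure_insert α s)))

/-- Deletion-contraction for the `G`-Tutte polynomial: with `𝒜' = 𝒜 \ {α}` and
`𝒜''` the contraction in `Γ/⟨α⟩`, `T_𝒜^G = T_{𝒜'}^G + (y-1)T_{𝒜''}^G` if `α` is a loop,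
`T_𝒜^G = (x-1)T_{𝒜'}^G + T_{𝒜''}^G` if `α` is a coloop, and
`T_𝒜^G = T_{𝒜'}^G + T_{𝒜''}^G` if `α` is proper. -/
theorem tutte_deletion_contraction {ι Γ : Type*} [DecidableEq ι] [AddCommGroup Γ]
    [AddGroup.FG Γ] (G : Type*) [AddCommGroup G] (hG : TorsionwiseFinite G)
    (A : Finset ι) (a : ι → Γ) (i₀ : ι) (hi₀ : i₀ ∈ A) :
    ∀ x y : ℤ,
      (a i₀ ∈ AddCommGroup.torsion Γ →
        Tpoly G A a x y = Tpoly G (A.erase i₀) a x y +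
          (y - 1) * Tpoly G (A.erase i₀)
            (fun i => QuotientAddGroup.mk' (AddSubgroup.closure ({a i₀} : Set Γ)) (a i)) x y) ∧
      (rk Γ (a '' (A : Set ι)) = rk Γ (a '' ((A.erase i₀) : Set ι)) + 1 →
        Tpoly G A a x y = (x - 1) * Tpoly G (A.erase i₀) a x y +
          Tpoly G (A.erase i₀)
            (fun i => QuotientAddGroup.mk' (AddSubgroup.closure ({a i₀} : Set Γ)) (a i)) x y) ∧
      (a i₀ ∉ AddCommGroup.torsion Γ ∧
          rk Γ (a '' (A : Set ι)) ≠ rk Γ (a '' ((A.erase i₀) : Set ι)) + 1 →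
        Tpoly G A a x y = Tpoly G (A.erase i₀) a x y +
          Tpoly G (A.erase i₀)
            (fun i => QuotientAddGroup.mk' (AddSubgroup.closure ({a i₀} : Set Γ)) (a i)) x y) := by
  classical
  intro x y
  set A' := A.erase i₀ with hA'def
  have hi₀' : i₀ ∉ A' := Finset.notMem_erase _ _
  have hAins : A = insert i₀ A' := (Finset.insert_erase hi₀).symm
  set b : ι → Γ ⧸ AddSubgroup.closure ({a i₀} : Set Γ) :=
    fun i => QuotientAddGroup.mk' (AddSubgroup.closure ({a i₀} : Set Γ)) (a i) with hbdef
  set d := rk Γ ({a i₀} : Set Γ) with hddef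
  have himg : ∀ S : Finset ι, a '' ↑(insert i₀ S) = insert (a i₀) (a '' ↑S) := by
    intro S; rw [Finset.coe_insert, Set.image_insert_eq]
  have himg2 : ∀ S : Finset ι,
      ⇑(QuotientAddGroup.mk' (AddSubgroup.closure ({a i₀} : Set Γ))) '' (a '' ↑S) = b '' ↑S := by
    intro S; rw [Set.image_image]
  have hrins : ∀ S : Finset ι,
      rk Γ (a '' ↑(insert i₀ S)) =
        rk (Γ ⧸ AddSubgroup.closure ({a i₀} : Set Γ)) (b '' ↑S) + d := by
    intro S; rw [himg S, rk_insert, himg2 S]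
  have hmins : ∀ S : Finset ι,
      mult Γ G (a '' ↑(insert i₀ S)) =
        mult (Γ ⧸ AddSubgroup.closure ({a i₀} : Set Γ)) G (b '' ↑S) := by
    intro S; rw [himg S, mult_insert, himg2 S]
  have hrA : rk Γ (a '' ↑A) = rk (Γ ⧸ AddSubgroup.closure ({a i₀} : Set Γ)) (b '' ↑A') + d := by
    rw [hAins]; exact hrins A'
  have hd1 : d ≤ 1 := rk_singleton_le_one _
  have hd0 : d = 0 ↔ a i₀ ∈ AddCommGroup.torsion Γ := by
    rw [hddef, rk_singleton_zero_iff, AddCommGroup.mem_torsion]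
  have hrA'le : rk Γ (a '' ↑A') ≤ rk Γ (a '' ↑A) :=
    rk_mono (Set.image_mono (by rw [hA'def]; exact_mod_cast Finset.erase_subset _ _))
  have hrAle : rk Γ (a '' ↑A) ≤ rk Γ (a '' ↑A') + d := by
    rw [hAins, himg A']
    exact rk_insert_le _ _
  -- the two sums
  set F1 : Finset ι → ℤ := fun S => (mult Γ G (a '' ↑S) : ℤ) *
      (x - 1) ^ (rk Γ (a '' ↑A) - rk Γ (a '' ↑S)) *
      (y - 1) ^ (S.card - rk Γ (a '' ↑S)) with hF1
  set F2 : Finset ι → ℤ := fun S =>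
      (mult (Γ ⧸ AddSubgroup.closure ({a i₀} : Set Γ)) G (b '' ↑S) : ℤ) *
      (x - 1) ^ (rk (Γ ⧸ AddSubgroup.closure ({a i₀} : Set Γ)) (b '' ↑A')
          - rk (Γ ⧸ AddSubgroup.closure ({a i₀} : Set Γ)) (b '' ↑S)) *
      (y - 1) ^ (S.card + 1 - (rk (Γ ⧸ AddSubgroup.closure ({a i₀} : Set Γ)) (b '' ↑S) + d))
    with hF2
  have hsplit : Tpoly G A a x y = (∑ S ∈ A'.powerset, F1 S) + ∑ S ∈ A'.powerset, F2 S := by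
    simp only [Tpoly]
    rw [show A.powerset = (insert i₀ A').powerset from by rw [← hAins],
      Finset.sum_powerset_insert hi₀']
    congr 1
    refine Finset.sum_congr rfl (fun S hS => ?_)
    have hiS : i₀ ∉ S := fun h => hi₀' (Finset.mem_powerset.mp hS h)
    simp only [hF2]
    rw [hmins S, hrins S, hrA, Finset.card_insert_of_notMem hiS,
      Nat.add_sub_add_right]
  have hdel_eq : rk Γ (a '' ↑A) = rk Γ (a '' ↑A') →
      (∑ S ∈ A'.powerset, F1 S) = Tpoly G A' a x y := by
    intro h
    simp only [Tpoly]
    exact Finset.sum_congr rfl (fun S _ => by simp only [hF1]; rw [h])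
  have hdel_co : rk Γ (a '' ↑A) = rk Γ (a '' ↑A') + 1 →
      (∑ S ∈ A'.powerset, F1 S) = (x - 1) * Tpoly G A' a x y := by
    intro h
    simp only [Tpoly, Finset.mul_sum]
    refine Finset.sum_congr rfl (fun S hS => ?_)
    have hle : rk Γ (a '' ↑S) ≤ rk Γ (a '' ↑A') :=
      rk_mono (Set.image_mono (by exact_mod_cast Finset.mem_powerset.mp hS))
    have hexp : rk Γ (a '' ↑A) - rk Γ (a '' ↑S) = (rk Γ (a '' ↑A') - rk Γ (a '' ↑S)) + 1 := by
      omega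
    simp only [hF1]
    rw [hexp, pow_succ]
    ring
  have hins_eq : d = 1 → (∑ S ∈ A'.powerset, F2 S) = Tpoly G A' b x y := by
    intro h
    simp only [Tpoly]
    refine Finset.sum_congr rfl (fun S hS => ?_)
    have hexp : S.card + 1 - (rk (Γ ⧸ AddSubgroup.closure ({a i₀} : Set Γ)) (b '' ↑S) + d) =
        S.card - rk (Γ ⧸ AddSubgroup.closure ({a i₀} : Set Γ)) (b '' ↑S) := by
      omega
    simp only [hF2]
    rw [hexp]
  have hins_loop : d = 0 → (∑ S ∈ A'.powerset, F2 S) = (y - 1) * Tpoly G A' b x y := by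
    intro h
    simp only [Tpoly, Finset.mul_sum]
    refine Finset.sum_congr rfl (fun S hS => ?_)
    have hcard : rk (Γ ⧸ AddSubgroup.closure ({a i₀} : Set Γ)) (b '' ↑S) ≤ S.card :=
      rk_image_le_card b S
    have hexp : S.card + 1 - (rk (Γ ⧸ AddSubgroup.closure ({a i₀} : Set Γ)) (b '' ↑S) + d) =
        (S.card - rk (Γ ⧸ AddSubgroup.closure ({a i₀} : Set Γ)) (b '' ↑S)) + 1 := by
      omega
    simp only [hF2]
    rw [hexp, pow_succ]
    ring
  refine ⟨?_, ?_, ?_⟩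
  · intro htor
    have hdz : d = 0 := hd0.mpr htor
    have hr : rk Γ (a '' ↑A) = rk Γ (a '' ↑A') := by omega
    rw [hsplit, hdel_eq hr, hins_loop hdz]
  · intro hco
    have hdz : d = 1 := by omega
    rw [hsplit, hdel_co hco, hins_eq hdz]
  · rintro ⟨hnt, hne⟩
    have hdz : d = 1 := by
      have : d ≠ 0 := fun h => hnt (hd0.mp h)
      omega
    have hr : rk Γ (a '' ↑A) = rk Γ (a '' ↑A') := by omega
    rw [hsplit, hdel_eq hr, hins_eq hdz]
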